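/- Let T: Z_p → Z_p be (p^{-k}, p^k) locally scaling. Then T is topologically conjugate to S^k: there exists a homeomorphism Φ: Z_p → Z_p with Φ ∘ T = S^k ∘ Φ. -/

import Mathlib

variable {p : ℕ} [hp : Fact p.Prime]

lemma padicShift_exists (x : ℤ_[p]) :
    ∃ y : ℤ_[p], x = ((PadicInt.toZMod x).val : ℤ_[p]) + p * y := by
  have h := PadicInt.toZMod_spec x
  rw [PadicInt.maximalIdeal_eq_span_p, Ideal.mem_span_singleton] at h
  obtain ⟨y, hy⟩ := h
  refine ⟨y, ?_⟩
  rw [← ZMod.natCast_val] at hy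
  linear_combination hy

/-- The `p`-adic shift, deleting the first digit of the `p`-adic expansion. -/
noncomputable def padicShift (x : ℤ_[p]) : ℤ_[p] :=
  Classical.choose (padicShift_exists x)

lemma padicShift_add (c : ℕ) (hc : c < p) (y : ℤ_[p]) :
    padicShift ((c : ℤ_[p]) + (p : ℤ_[p]) * y) = y := by
  set x : ℤ_[p] := (c : ℤ_[p]) + (p : ℤ_[p]) * y with hx
  have h : x = ((PadicInt.toZMod x).val : ℤ_[p]) + p * padicShift x :=
    Classical.choose_spec (padicShift_exists x)
  have h1 : PadicInt.toZMod x = (c : ZMod p) := by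
    rw [hx, map_add, map_mul, map_natCast, map_natCast, ZMod.natCast_self, zero_mul, add_zero]
  have hval : (((PadicInt.toZMod x).val : ℕ) : ℤ_[p]) = (c : ℤ_[p]) := by
    rw [h1, ZMod.val_cast_of_lt hc]
  have hp0 : (p : ℤ_[p]) ≠ 0 := Nat.cast_ne_zero.mpr hp.1.ne_zero
  have key : (p : ℤ_[p]) * padicShift x = (p : ℤ_[p]) * y := by
    rw [hx] at h ⊢
    linear_combination -h - hval
  exact mul_left_cancel₀ hp0 key

lemma padicShift_iterate (k a : ℕ) (ha : a < p ^ k) (y : ℤ_[p]) :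
    padicShift^[k] ((a : ℤ_[p]) + (p : ℤ_[p]) ^ k * y) = y := by
  induction k generalizing a y with
  | zero =>
    rw [pow_zero] at ha
    interval_cases a
    simp
  | succ k ih =>
    rw [Function.iterate_succ_apply]
    have cast_eq : ((a % p + p * (a / p) : ℕ) : ℤ_[p]) = (a : ℤ_[p]) := by
      rw [Nat.mod_add_div]
    push_cast at cast_eq
    have key : (a : ℤ_[p]) + (p : ℤ_[p]) ^ (k + 1) * y
        = ((a % p : ℕ) : ℤ_[p]) + (p : ℤ_[p]) * (((a / p : ℕ) : ℤ_[p]) + (p : ℤ_[p]) ^ k * y) := by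
      rw [← cast_eq]; ring
    rw [key, padicShift_add _ (Nat.mod_lt _ hp.1.pos)]
    apply ih
    exact Nat.div_lt_of_lt_mul (by rw [← pow_succ'] ; exact ha)

lemma isometry_iterate {X : Type*} [MetricSpace X] {f : X → X} (hf : Isometry f) (n : ℕ) :
    Isometry f^[n] := by
  induction n with
  | zero => simpa using isometry_id
  | succ n ih => rw [Function.iterate_succ]; exact ih.comp hf

lemma isometry_surjective_of_compact {X : Type*} [MetricSpace X] [CompactSpace X] {f : X → X}
    (hf : Isometry f) : Function.Surjective f := by
  intro x
  have hclosed : IsClosed (Set.range f) := hf.isClosedEmbedding.isClosed_range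
  suffices h : x ∈ closure (Set.range f) by rwa [hclosed.closure_eq] at h
  rw [Metric.mem_closure_iff]
  intro ε hε
  obtain ⟨a, -, φ, hφ, hconv⟩ :=
    isCompact_univ.tendsto_subseq (fun n => Set.mem_univ (f^[n] x))
  have hc : CauchySeq fun n => f^[φ n] x := hconv.cauchySeq
  rw [Metric.cauchySeq_iff'] at hc
  obtain ⟨N, hN⟩ := hc ε hε
  have hd : dist (f^[φ (N + 1)] x) (f^[φ N] x) < ε := hN (N + 1) (by omega)
  set m := φ N
  set n := φ (N + 1)
  have hmn : m < n := hφ (by omega)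
  have hsplit : f^[n] x = f^[m] (f^[n - m] x) := by
    rw [← Function.iterate_add_apply]
    congr 1
    omega
  have hdist : dist (f^[n - m] x) x = dist (f^[n] x) (f^[m] x) := by
    conv_rhs => rw [hsplit]
    rw [(isometry_iterate hf m).dist_eq]
  refine ⟨f^[n - m] x, ⟨f^[n - m - 1] x, ?_⟩, ?_⟩
  · conv_rhs => rw [show n - m = (n - m - 1) + 1 by omega, Function.iterate_succ_apply']
  · rw [dist_comm, hdist]
    exact hd

variable {p : ℕ} [hp : Fact p.Prime]

noncomputable def phiMap (k : ℕ) (T : ℤ_[p] → ℤ_[p]) (x : ℤ_[p]) : ℤ_[p] :=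
  ∑' n : ℕ, (((T^[n] x).appr k : ℕ) : ℤ_[p]) * (p : ℤ_[p]) ^ (k * n)

lemma phi_summable (k : ℕ) (hk : 1 ≤ k) (T : ℤ_[p] → ℤ_[p]) (x : ℤ_[p]) :
    Summable (fun n : ℕ => (((T^[n] x).appr k : ℕ) : ℤ_[p]) * (p : ℤ_[p]) ^ (k * n)) := by
  have hp1 : (1 : ℝ) < p := by exact_mod_cast hp.1.one_lt
  apply Summable.of_norm_bounded (g := fun n : ℕ => (((p : ℝ)⁻¹) ^ k) ^ n)
  · apply summable_geometric_of_lt_one (by positivity)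
    apply pow_lt_one₀ (by positivity) (by rw [inv_lt_one_iff₀]; right; exact hp1)
    omega
  · intro n
    calc ‖(((T^[n] x).appr k : ℕ) : ℤ_[p]) * (p : ℤ_[p]) ^ (k * n)‖
        ≤ ‖(p : ℤ_[p]) ^ (k * n)‖ := by
          rw [norm_mul]
          exact mul_le_of_le_one_left (norm_nonneg _) (PadicInt.norm_le_one _)
      _ = (((p : ℝ)⁻¹) ^ k) ^ n := by
          rw [PadicInt.norm_p_pow, ← pow_mul, zpow_neg, zpow_natCast, inv_pow]

lemma phi_rec (k : ℕ) (hk : 1 ≤ k) (T : ℤ_[p] → ℤ_[p]) (x : ℤ_[p]) :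
    phiMap k T x = ((x.appr k : ℕ) : ℤ_[p]) + (p : ℤ_[p]) ^ k * phiMap k T (T x) := by
  rw [phiMap, Summable.tsum_eq_zero_add (phi_summable k hk T x)]
  simp only [Function.iterate_zero_apply, Nat.mul_zero, pow_zero, mul_one]
  congr 1
  rw [phiMap, ← Summable.tsum_mul_left ((p : ℤ_[p]) ^ k) (phi_summable k hk T (T x))]
  congr 1
  funext n
  rw [Function.iterate_succ_apply]
  rw [show k * (n + 1) = k * n + k by ring, pow_add]
  ring

lemma norm_sub_appr_le (k : ℕ) (x : ℤ_[p]) :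
    ‖x - ((x.appr k : ℕ) : ℤ_[p])‖ ≤ (p : ℝ) ^ (-(k : ℤ)) := by
  rw [show (-(k:ℤ)) = (-(k:ℕ) : ℤ) by norm_num, PadicInt.norm_le_pow_iff_mem_span_pow]
  exact PadicInt.appr_spec k x

lemma appr_eq_of_norm_le (k : ℕ) {x y : ℤ_[p]} (h : ‖x - y‖ ≤ (p : ℝ) ^ (-(k : ℤ))) :
    x.appr k = y.appr k := by
  have hx := PadicInt.appr_spec k x
  have hy := PadicInt.appr_spec k y
  have hmem : x - y ∈ Ideal.span {(p : ℤ_[p]) ^ k} := by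
    rw [← PadicInt.norm_le_pow_iff_mem_span_pow]
    exact_mod_cast h
  have hy2 : x - ((y.appr k : ℕ) : ℤ_[p]) ∈ Ideal.span {(p : ℤ_[p]) ^ k} := by
    have heq : x - ((y.appr k : ℕ) : ℤ_[p]) = (x - y) + (y - ((y.appr k : ℕ) : ℤ_[p])) := by ring
    rw [heq]
    exact Ideal.add_mem _ hmem hy
  have hzm := PadicInt.zmod_congr_of_sub_mem_span k x (x.appr k) (y.appr k) hx hy2
  have := congrArg ZMod.val hzm
  rwa [ZMod.val_cast_of_lt (PadicInt.appr_lt x k), ZMod.val_cast_of_lt (PadicInt.appr_lt y k)]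
    at this

lemma appr_norm_gt (k : ℕ) {a b : ℕ} (ha : a < p ^ k) (hb : b < p ^ k) (hne : a ≠ b) :
    (p : ℝ) ^ (-(k : ℤ)) < ‖(a : ℤ_[p]) - (b : ℤ_[p])‖ := by
  by_contra hcon
  push_neg at hcon
  have hmem : (a : ℤ_[p]) - (b : ℤ_[p]) ∈ Ideal.span {(p : ℤ_[p]) ^ k} := by
    rw [← PadicInt.norm_le_pow_iff_mem_span_pow]
    exact_mod_cast hcon
  rw [Ideal.mem_span_singleton] at hmem
  have hcast : (a : ℤ_[p]) - (b : ℤ_[p]) = (((a : ℤ) - (b : ℤ) : ℤ) : ℤ_[p]) := by push_cast; ring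
  rw [hcast, PadicInt.pow_p_dvd_int_iff] at hmem
  have hne' : (a : ℤ) - (b : ℤ) ≠ 0 := by
    intro h0
    exact hne (by omega)
  have := Int.le_of_dvd (abs_pos.mpr hne') ((dvd_abs _ _).mpr hmem)
  have hpk : ((p ^ k : ℕ) : ℤ) = (p : ℤ) ^ k := by push_cast; ring
  have ha' : (a : ℤ) < (p : ℤ) ^ k := by rw [← hpk]; exact_mod_cast ha
  have hb' : (b : ℤ) < (p : ℤ) ^ k := by rw [← hpk]; exact_mod_cast hb
  have ha0 : (0 : ℤ) ≤ (a : ℤ) := Int.natCast_nonneg a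
  have hb0 : (0 : ℤ) ≤ (b : ℤ) := Int.natCast_nonneg b
  have habs : |(a : ℤ) - (b : ℤ)| < (p : ℤ) ^ k := by
    rw [abs_lt]
    constructor <;> linarith
  linarith

lemma norm_add_eq_left {u v : ℤ_[p]} (h : ‖v‖ < ‖u‖) : ‖u + v‖ = ‖u‖ := by
  rw [PadicInt.norm_add_eq_max_of_ne h.ne']
  exact max_eq_left h.le

lemma phi_isom (k : ℕ) (hk : 1 ≤ k) (T : ℤ_[p] → ℤ_[p])
    (hT : ∀ x y : ℤ_[p], ‖x - y‖ ≤ (p : ℝ) ^ (-(k : ℤ)) →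
      ‖T x - T y‖ = (p : ℝ) ^ (k : ℕ) * ‖x - y‖) (x y : ℤ_[p]) :
    ‖phiMap k T x - phiMap k T y‖ = ‖x - y‖ := by
  have hp0 : (0 : ℝ) < p := by exact_mod_cast hp.1.pos
  have hp1 : (1 : ℝ) < p := by exact_mod_cast hp.1.one_lt
  have main : ∀ m : ℕ, ∀ x y : ℤ_[p], ‖x - y‖ = (p : ℝ) ^ (-(m : ℤ)) →
      ‖phiMap k T x - phiMap k T y‖ = ‖x - y‖ := by
    intro m
    induction m using Nat.strong_induction_on with
    | _ m ih =>
      intro x y hxy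
      by_cases hle : ‖x - y‖ ≤ (p : ℝ) ^ (-(k : ℤ))
      · have happr : x.appr k = y.appr k := appr_eq_of_norm_le k hle
        have hfac : phiMap k T x - phiMap k T y
            = (p : ℤ_[p]) ^ k * (phiMap k T (T x) - phiMap k T (T y)) := by
          rw [phi_rec k hk T x, phi_rec k hk T y, happr]; ring
        have hkm : k ≤ m := by
          rw [hxy] at hle
          have := (zpow_le_zpow_iff_right₀ hp1).mp hle
          omega
        have hTnorm : ‖T x - T y‖ = (p : ℝ) ^ (-(↑(m - k) : ℤ)) := by
          rw [hT x y hle, hxy, ← zpow_natCast (p : ℝ) k, ← zpow_add₀ (ne_of_gt hp0)]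
          congr 1
          omega
        have hrec := ih (m - k) (by omega) (T x) (T y) hTnorm
        rw [hfac, norm_mul, PadicInt.norm_p_pow, hrec, hTnorm, hxy,
          ← zpow_add₀ (ne_of_gt hp0)]
        congr 1
        omega
      · push_neg at hle
        have hne : x.appr k ≠ y.appr k := by
          intro h
          refine absurd ?_ hle.not_ge
          have heq : x - y = (x - ((x.appr k : ℕ) : ℤ_[p])) - (y - ((y.appr k : ℕ) : ℤ_[p])) := by
            rw [h]; ring
          rw [show (-(k : ℤ)) = (-(k : ℕ) : ℤ) by norm_num, PadicInt.norm_le_pow_iff_mem_span_pow,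
            heq]
          exact Ideal.sub_mem _ (PadicInt.appr_spec k x) (PadicInt.appr_spec k y)
        set A : ℤ_[p] := ((x.appr k : ℕ) : ℤ_[p]) with hA
        set B : ℤ_[p] := ((y.appr k : ℕ) : ℤ_[p]) with hB
        have hABgt : (p : ℝ) ^ (-(k : ℤ)) < ‖A - B‖ :=
          appr_norm_gt k (PadicInt.appr_lt x k) (PadicInt.appr_lt y k) hne
        have h1 : ‖x - y‖ = ‖A - B‖ := by
          have hsm : ‖(x - A) - (y - B)‖ < ‖A - B‖ := by
            refine lt_of_le_of_lt ?_ hABgt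
            refine le_trans (le_trans (by rw [sub_eq_add_neg]) (PadicInt.nonarchimedean _ _)) ?_
            rw [norm_neg]
            exact max_le (norm_sub_appr_le k x) (norm_sub_appr_le k y)
          have hxy' : x - y = (A - B) + ((x - A) - (y - B)) := by ring
          rw [hxy', norm_add_eq_left hsm]
        have h2 : ‖phiMap k T x - phiMap k T y‖ = ‖A - B‖ := by
          have hfac : phiMap k T x - phiMap k T y
              = (A - B) + (p : ℤ_[p]) ^ k * (phiMap k T (T x) - phiMap k T (T y)) := by
            rw [phi_rec k hk T x, phi_rec k hk T y]; ring
          have hsm : ‖(p : ℤ_[p]) ^ k * (phiMap k T (T x) - phiMap k T (T y))‖ < ‖A - B‖ := by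
            rw [norm_mul, PadicInt.norm_p_pow]
            refine lt_of_le_of_lt ?_ hABgt
            exact mul_le_of_le_one_right (by positivity) (PadicInt.norm_le_one _)
          rw [hfac, norm_add_eq_left hsm]
        rw [h2, h1]
  by_cases hxy : x = y
  · rw [hxy]; simp
  · have hne0 : x - y ≠ 0 := sub_ne_zero.mpr hxy
    have hval := PadicInt.norm_eq_zpow_neg_valuation hne0
    have hnn := Nat.zero_le (x - y).valuation
    refine main (x - y).valuation x y ?_
    exact hval

/-- a `(p^{-k}, p^k)` locally scaling map is topologically conjugate to
the `k`-fold iterate of the `p`-adic shift. -/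
theorem locallyScaling_conjugate_shift (k : ℕ) (hk : 1 ≤ k) (T : ℤ_[p] → ℤ_[p])
    (hT : ∀ x y : ℤ_[p], ‖x - y‖ ≤ (p : ℝ) ^ (-(k : ℤ)) →
      ‖T x - T y‖ = (p : ℝ) ^ (k : ℕ) * ‖x - y‖) :
    ∃ Φ : ℤ_[p] ≃ₜ ℤ_[p], ∀ x : ℤ_[p], Φ (T x) = padicShift^[k] (Φ x) := by
  have hisom : Isometry (phiMap k T) := Isometry.of_dist_eq (fun a b => by
    rw [dist_eq_norm, dist_eq_norm]; exact phi_isom k hk T hT a b)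
  have hbij : Function.Bijective (phiMap k T) :=
    ⟨hisom.injective, isometry_surjective_of_compact hisom⟩
  let e : ℤ_[p] ≃ ℤ_[p] := Equiv.ofBijective _ hbij
  have hcont : Continuous e := hisom.continuous
  refine ⟨Continuous.homeoOfEquivCompactToT2 hcont, fun x => ?_⟩
  show phiMap k T (T x) = padicShift^[k] (phiMap k T x)
  rw [phi_rec k hk T x, padicShift_iterate k _ (PadicInt.appr_lt x k)]
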